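/- Let A be a 2×2 complex matrix with all entries in the open upper half-plane ℂ⁺ such that the spectral radius of the entrywise absolute-value matrix |A| is at most 1. If ξ ∈ ℂ² is a vector with Aξ = ξ, then ξ = 0. -/

import Mathlib

open Complex Matrix

/-- Triangle-equality lemma: if `u + v = s`, `‖s‖ = ‖u‖ + ‖v‖` and `s ≠ 0`, then `u` is a
nonnegative real multiple of `s`. -/
lemma aux_ray {u v s : ℂ} (hsum : u + v = s) (hnorm : ‖s‖ = ‖u‖ + ‖v‖) (hs : s ≠ 0) :
    ∃ r : ℝ, 0 ≤ r ∧ (r : ℂ) * s = u := by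
  have huv : SameRay ℝ u v := by
    rw [sameRay_iff_norm_add, hsum, ← hnorm]
  have hus : SameRay ℝ u s := by
    rw [← hsum]
    exact (SameRay.refl u).add_right huv
  rcases hus.symm.exists_nonneg_left hs with ⟨r, hr, hru⟩
  exact ⟨r, hr, by simpa [Complex.real_smul] using hru⟩

/-- if a 2×2 matrix has all entries in the open upper half-plane and the
entrywise absolute value matrix has spectral radius at most 1, then the only fixed vector
of `A` is zero. -/
theorem stmt_1 (A : Matrix (Fin 2) (Fin 2) ℂ)
    (hA : ∀ i j, 0 < (A i j).im)
    (hρ : ∀ μ : ℂ, (∃ v : Fin 2 → ℂ, v ≠ 0 ∧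
        (A.map (fun a => ((‖a‖ : ℝ) : ℂ))).mulVec v = μ • v) → ‖μ‖ ≤ 1)
    (ξ : Fin 2 → ℂ) (hξ : A.mulVec ξ = ξ) : ξ = 0 := by
  have hAne : ∀ i j, A i j ≠ 0 := by
    intro i j h
    have := hA i j
    rw [h] at this
    simp at this
  have hb : ∀ i j, 0 < ‖A i j‖ := fun i j =>
    norm_pos_iff.mpr (hAne i j)
  set b00 := ‖A 0 0‖ with hb00
  set b01 := ‖A 0 1‖ with hb01
  set b10 := ‖A 1 0‖ with hb10
  set b11 := ‖A 1 1‖ with hb11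
  have hb00p : 0 < b00 := hb 0 0
  have hb01p : 0 < b01 := hb 0 1
  have hb10p : 0 < b10 := hb 1 0
  have hb11p : 0 < b11 := hb 1 1
  set D : ℝ := (b00 - b11) ^ 2 + 4 * (b01 * b10) with hD
  have hDpos : 0 < D := by positivity
  set s : ℝ := Real.sqrt D with hs
  have hs2 : s ^ 2 = (b00 - b11) ^ 2 + 4 * (b01 * b10) := (Real.sq_sqrt hDpos.le).trans hD
  have hs0 : 0 ≤ s := Real.sqrt_nonneg D
  set l : ℝ := (b00 + b11 + s) / 2 with hl
  have hquad : l * l + (b00 * b11 - b01 * b10) = (b00 + b11) * l := by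
    rw [hl]
    linear_combination hs2 / 4
  have hlb00 : b00 < l := by nlinarith [hs2, hs0, mul_pos hb01p hb10p]
  have hlb11 : b11 < l := by nlinarith [hs2, hs0, mul_pos hb01p hb10p]
  have hlpos : 0 < l := lt_trans hb00p hlb00
  -- l is an eigenvalue of |A|, hence l ≤ 1
  have hle1 : l ≤ 1 := by
    have e1 : b10 * b01 + b11 * (l - b00) = l * (l - b00) := by linear_combination -hquad
    have h1 : (A.map (fun a => ((‖a‖ : ℝ) : ℂ))).mulVec
        ![(b01 : ℂ), ((l - b00 : ℝ) : ℂ)] = (l : ℂ) • ![(b01 : ℂ), ((l - b00 : ℝ) : ℂ)] := by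
      funext i
      fin_cases i
      · simp [Matrix.mulVec, dotProduct, Fin.sum_univ_two, Matrix.map_apply,
          ← hb00, ← hb01, ← hb10, ← hb11]
        ring
      · simp [Matrix.mulVec, dotProduct, Fin.sum_univ_two, Matrix.map_apply,
          ← hb00, ← hb01, ← hb10, ← hb11]
        exact_mod_cast e1
    have hv : (![(b01 : ℂ), ((l - b00 : ℝ) : ℂ)] : Fin 2 → ℂ) ≠ 0 := by
      intro h
      have h0 : (b01 : ℂ) = 0 := by simpa using congrFun h 0
      rw [Complex.ofReal_eq_zero] at h0
      exact hb01p.ne' h0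
    have h2 := hρ (l : ℂ) ⟨_, hv, h1⟩
    rwa [Complex.norm_real, Real.norm_eq_abs, abs_of_pos hlpos] at h2
  -- fixed-point equations
  have heq0 : A 0 0 * ξ 0 + A 0 1 * ξ 1 = ξ 0 := by
    have := congrFun hξ 0
    simpa [Matrix.mulVec, dotProduct, Fin.sum_univ_two] using this
  have heq1 : A 1 0 * ξ 0 + A 1 1 * ξ 1 = ξ 1 := by
    have := congrFun hξ 1
    simpa [Matrix.mulVec, dotProduct, Fin.sum_univ_two] using this
  set x0 := ‖ξ 0‖ with hx0d
  set x1 := ‖ξ 1‖ with hx1d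
  have hx0n : 0 ≤ x0 := norm_nonneg _
  have hx1n : 0 ≤ x1 := norm_nonneg _
  have hineq0 : x0 ≤ b00 * x0 + b01 * x1 := by
    calc x0 = ‖A 0 0 * ξ 0 + A 0 1 * ξ 1‖ := by rw [heq0]
    _ ≤ ‖A 0 0 * ξ 0‖ + ‖A 0 1 * ξ 1‖ := norm_add_le _ _
    _ = b00 * x0 + b01 * x1 := by rw [norm_mul, norm_mul]
  have hineq1 : x1 ≤ b10 * x0 + b11 * x1 := by
    calc x1 = ‖A 1 0 * ξ 0 + A 1 1 * ξ 1‖ := by rw [heq1]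
    _ ≤ ‖A 1 0 * ξ 0‖ + ‖A 1 1 * ξ 1‖ := norm_add_le _ _
    _ = b10 * x0 + b11 * x1 := by rw [norm_mul, norm_mul]
  -- left Perron eigenvector forces equality componentwise
  have hkey : b10 * (b00 * x0 + b01 * x1 - x0) + (l - b00) * (b10 * x0 + b11 * x1 - x1)
      = (l - 1) * (b10 * x0 + (l - b00) * x1) := by linear_combination (-x1) * hquad
  have hw0 : 0 < b10 := hb10p
  have hw1 : 0 < l - b00 := sub_pos.2 hlb00
  have ht0 : 0 ≤ b00 * x0 + b01 * x1 - x0 := sub_nonneg.2 hineq0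
  have ht1 : 0 ≤ b10 * x0 + b11 * x1 - x1 := sub_nonneg.2 hineq1
  have hrhs : (l - 1) * (b10 * x0 + (l - b00) * x1) ≤ 0 :=
    mul_nonpos_of_nonpos_of_nonneg (by linarith)
      (add_nonneg (mul_nonneg hw0.le hx0n) (mul_nonneg hw1.le hx1n))
  have hsum0 : b10 * (b00 * x0 + b01 * x1 - x0) + (l - b00) * (b10 * x0 + b11 * x1 - x1) ≤ 0 :=
    le_of_eq hkey |>.trans hrhs
  have hp0 : 0 ≤ b10 * (b00 * x0 + b01 * x1 - x0) := mul_nonneg hw0.le ht0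
  have hp1 : 0 ≤ (l - b00) * (b10 * x0 + b11 * x1 - x1) := mul_nonneg hw1.le ht1
  have hz0 : b10 * (b00 * x0 + b01 * x1 - x0) = 0 := by linarith
  have hz1 : (l - b00) * (b10 * x0 + b11 * x1 - x1) = 0 := by linarith
  have hu0 : b00 * x0 + b01 * x1 - x0 = 0 := (mul_eq_zero.mp hz0).resolve_left hw0.ne'
  have hu1 : b10 * x0 + b11 * x1 - x1 = 0 := (mul_eq_zero.mp hz1).resolve_left hw1.ne'
  -- triangle-equality argument at each coordinate
  have hxi0 : ξ 0 = 0 := by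
    by_contra h0
    have hnorm : ‖ξ 0‖ = ‖A 0 0 * ξ 0‖ + ‖A 0 1 * ξ 1‖ := by
      simp only [norm_mul, ← hb00, ← hb01, ← hx0d, ← hx1d]
      linarith [hu0]
    obtain ⟨r, hr, hru⟩ := aux_ray heq0 hnorm h0
    have hA00 : A 0 0 = (r : ℂ) := (mul_right_cancel₀ h0 hru).symm
    have him := hA 0 0
    rw [hA00] at him
    simp at him
  have hxi1 : ξ 1 = 0 := by
    by_contra h1
    have heq1' : A 1 1 * ξ 1 + A 1 0 * ξ 0 = ξ 1 := by rw [add_comm]; exact heq1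
    have hnorm : ‖ξ 1‖ = ‖A 1 1 * ξ 1‖ + ‖A 1 0 * ξ 0‖ := by
      simp only [norm_mul, ← hb10, ← hb11, ← hx0d, ← hx1d]
      linarith [hu1]
    obtain ⟨r, hr, hru⟩ := aux_ray heq1' hnorm h1
    have hA11 : A 1 1 = (r : ℂ) := (mul_right_cancel₀ h1 hru).symm
    have him := hA 1 1
    rw [hA11] at him
    simp at him
  funext i
  fin_cases i
  · exact hxi0
  · exact hxi1
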